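/- (Lemma 4, small-gain bound.) In the setting of Theorem 1 (nominal SLS responses Φ = [Φ_x; Φ_u], model error Δℳ with ‖ΔA‖ ≤ e_A, ‖ΔB‖ ≤ e_B, data (x^i, u^i) with true disturbances w^i and nominal disturbances ŵ^i all having first n coordinates equal to x₀, true disturbance distribution P_w with finite first moment supported on {w : first n coordinates equal x₀}), assume additionally that d_W(P̄_w, P_w) ≤ κ for some κ > 0 and that max(e_A, e_B)·‖ΦZ‖ < γ for some γ ∈ [0, 1). Then the Wasserstein distance between the empirical predictive distribution P̂_pred = (1/N)Σ_i δ_{Φŵ^i} and the true closed-loop distribution P_cl = ((I + ΦZΔℳ)⁻¹Φ)#P_w satisfies d_W(P̂_pred, P_cl) ≤ (γ/(1 − γ)) · (1/N)Σ_{i=1}^N ‖Φŵ^i − [x^i; u^i]‖ + (κ/(1 − γ)) · ‖ΦZ‖. -/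

import Mathlib

open MeasureTheory Matrix
open scoped ENNReal

/-- The ℓ¹-norm of a vector. -/
noncomputable def l1norm {ι : Type*} [Fintype ι] (v : ι → ℝ) : ℝ := ∑ i, |v i|

/-- The induced ℓ¹-norm of a matrix (maximum absolute column sum). -/
noncomputable def matL1 {ι κ : Type*} [Fintype ι] [Fintype κ] (M : Matrix ι κ ℝ) : ℝ :=
  ⨆ j, ∑ i, |M i j|

/-- The Wasserstein-1 distance (w.r.t. the ℓ¹-norm): infimum over couplings of the expected
ℓ¹-distance. -/
noncomputable def wass {ι : Type*} [Fintype ι] (P Q : Measure (ι → ℝ)) : ℝ :=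
  sInf { r | ∃ π : Measure ((ι → ℝ) × (ι → ℝ)),
    IsProbabilityMeasure π ∧ π.map Prod.fst = P ∧ π.map Prod.snd = Q ∧
    r = ∫ p, l1norm (p.1 - p.2) ∂π }

/-- The uniform empirical measure `(1/N) ∑ᵢ δ_{a i}`. -/
noncomputable def emp {ι : Type*} [Fintype ι] {N : ℕ} (a : Fin N → (ι → ℝ)) :
    Measure (ι → ℝ) :=
  (N : ℝ≥0∞)⁻¹ • ∑ i, Measure.dirac (a i)

/-- The block-downshift matrix `Z`, with `n × n` identity blocks on the first block
subdiagonal and zero blocks elsewhere. -/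
noncomputable def dshift (T n : ℕ) : Matrix (Fin (T+1) × Fin n) (Fin (T+1) × Fin n) ℝ :=
  fun p q => if (p.1 : ℕ) = (q.1 : ℕ) + 1 ∧ p.2 = q.2 then 1 else 0

/-- `blkdiag T M`: block-diagonal matrix with `T+1` copies of `M` on the diagonal. -/
noncomputable def blkdiag (T : ℕ) {n m : ℕ} (M : Matrix (Fin n) (Fin m) ℝ) :
    Matrix (Fin (T+1) × Fin n) (Fin (T+1) × Fin m) ℝ :=
  fun p q => if p.1 = q.1 then M p.2 q.2 else 0

/-- A block-partitioned matrix is block lower triangular: all blocks strictly above the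
block diagonal are zero. -/
def BlockLT {T n m : ℕ} (M : Matrix (Fin (T+1) × Fin m) (Fin (T+1) × Fin n) ℝ) : Prop :=
  ∀ p q, p.1 < q.1 → M p q = 0

section lem
variable {ι κ τ : Type*} [Fintype ι] [Fintype κ] [Fintype τ]

lemma l1norm_nonneg (v : ι → ℝ) : 0 ≤ l1norm v :=
  Finset.sum_nonneg fun _ _ => abs_nonneg _

lemma l1norm_pos {v : ι → ℝ} (hv : v ≠ 0) : 0 < l1norm v := by
  obtain ⟨i, hi⟩ := Function.ne_iff.mp hv
  have : 0 < |v i| := abs_pos.mpr hi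
  have : |v i| ≤ l1norm v := Finset.single_le_sum (f := fun i => |v i|)
    (fun _ _ => abs_nonneg _) (Finset.mem_univ i)
  linarith

lemma l1norm_sub_le (a b : ι → ℝ) : l1norm (a - b) ≤ l1norm a + l1norm b := by
  rw [l1norm, l1norm, l1norm, ← Finset.sum_add_distrib]
  exact Finset.sum_le_sum fun i _ => abs_sub (a i) (b i)

lemma l1norm_triangle (a b c : ι → ℝ) : l1norm (a - c) ≤ l1norm (a - b) + l1norm (b - c) := by
  rw [l1norm, l1norm, l1norm, ← Finset.sum_add_distrib]
  exact Finset.sum_le_sum fun i _ => by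
    simpa using abs_sub_le (a i) (b i) (c i)

lemma col_le_matL1 (M : Matrix ι κ ℝ) (j : κ) : ∑ i, |M i j| ≤ matL1 M :=
  le_ciSup (f := fun j => ∑ i, |M i j|) (Set.Finite.bddAbove (Set.finite_range _)) j

lemma matL1_nonneg [Nonempty κ] (M : Matrix ι κ ℝ) : 0 ≤ matL1 M := by
  obtain ⟨j⟩ := ‹Nonempty κ›
  exact le_trans (Finset.sum_nonneg fun _ _ => abs_nonneg _) (col_le_matL1 M j)

lemma matL1_le [Nonempty κ] {M : Matrix ι κ ℝ} {c : ℝ} (h : ∀ j, ∑ i, |M i j| ≤ c) :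
    matL1 M ≤ c := ciSup_le h

lemma l1norm_mulVec_le (M : Matrix ι κ ℝ) (v : κ → ℝ) :
    l1norm (M *ᵥ v) ≤ matL1 M * l1norm v := by
  have h1 : l1norm (M *ᵥ v) ≤ ∑ j, |v j| * ∑ i, |M i j| := by
    rw [l1norm]
    calc ∑ i, |(M *ᵥ v) i| ≤ ∑ i, ∑ j, |M i j| * |v j| := by
          refine Finset.sum_le_sum fun i _ => ?_
          rw [Matrix.mulVec, dotProduct]
          refine le_trans (Finset.abs_sum_le_sum_abs _ _) ?_
          refine Finset.sum_le_sum fun j _ => ?_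
          rw [abs_mul]
      _ = ∑ j, |v j| * ∑ i, |M i j| := by
          rw [Finset.sum_comm]
          refine Finset.sum_congr rfl fun j _ => ?_
          rw [Finset.mul_sum]
          exact Finset.sum_congr rfl fun i _ => mul_comm _ _
  refine le_trans h1 ?_
  rw [l1norm, Finset.mul_sum]
  refine Finset.sum_le_sum fun j _ => ?_
  rw [mul_comm (matL1 M)]
  exact
    mul_le_mul_of_nonneg_left (col_le_matL1 M j) (abs_nonneg _)

lemma matL1_mul_le [Nonempty τ] [Nonempty κ] (M : Matrix ι κ ℝ) (P : Matrix κ τ ℝ) :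
    matL1 (M * P) ≤ matL1 M * matL1 P := by
  refine matL1_le fun j => ?_
  have : ∑ i, |(M * P) i j| = l1norm (M *ᵥ (fun k => P k j)) := by
    rw [l1norm]; refine Finset.sum_congr rfl fun i _ => ?_
    rw [Matrix.mul_apply, Matrix.mulVec, dotProduct]
  rw [this]
  refine le_trans (l1norm_mulVec_le _ _) ?_
  refine mul_le_mul_of_nonneg_left ?_ (matL1_nonneg M)
  exact col_le_matL1 P j

end lem

section shift
variable {T n : ℕ}

lemma exists_shift (v : (Fin (T+1) × Fin n) → ℝ) (h0 : ∀ j, v (0, j) = 0) :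
    ∃ v', dshift T n *ᵥ v' = v ∧ l1norm v' ≤ l1norm v := by
  classical
  set v' : (Fin (T+1) × Fin n) → ℝ := fun q =>
    if h : (q.1 : ℕ) + 1 < T + 1 then v (⟨(q.1 : ℕ) + 1, h⟩, q.2) else 0 with hv'
  refine ⟨v', ?_, ?_⟩
  · funext p
    obtain ⟨pt, pj⟩ := p
    rw [Matrix.mulVec, dotProduct]
    rcases Nat.eq_zero_or_pos (pt : ℕ) with hz | hpos
    · have hpt : pt = 0 := Fin.ext hz
      rw [Finset.sum_eq_zero, hpt, h0]
      intro q _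
      have : ¬ (((pt, pj).1 : ℕ) = (q.1 : ℕ) + 1 ∧ (pt, pj).2 = q.2) := by
        rintro ⟨h1, -⟩
        have h1' : (pt : ℕ) = (q.1 : ℕ) + 1 := h1
        omega
      simp [dshift, this]
    · have hlt : (pt : ℕ) - 1 < T + 1 := by have := pt.isLt; omega
      set q0 : Fin (T+1) × Fin n := (⟨(pt : ℕ) - 1, hlt⟩, pj) with hq0
      rw [Finset.sum_eq_single q0]
      · have hc : (((pt, pj).1 : ℕ) = ((q0.1 : ℕ)) + 1 ∧ (pt, pj).2 = q0.2) := by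
          constructor
          · show (pt : ℕ) = (pt : ℕ) - 1 + 1; omega
          · rfl
        have hlt2 : (q0.1 : ℕ) + 1 < T + 1 := by
          have := pt.isLt; show (pt : ℕ) - 1 + 1 < T + 1; omega
        simp only [dshift, hc, and_self, if_pos, one_mul, hv', dif_pos hlt2]
        have he : ((⟨(q0.1 : ℕ) + 1, hlt2⟩ : Fin (T+1)), q0.2) = (pt, pj) :=
          Prod.ext (Fin.ext (by show (pt : ℕ) - 1 + 1 = (pt : ℕ); omega)) rfl
        rw [he]
        have hv2 : (pt : ℕ) = (pt : ℕ) - 1 + 1 := by omega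
        rw [if_pos ⟨hv2, rfl⟩, one_mul]
      · intro q _ hq
        have : ¬ (((pt, pj).1 : ℕ) = (q.1 : ℕ) + 1 ∧ (pt, pj).2 = q.2) := by
          rintro ⟨h1, h2⟩
          have h1' : (pt : ℕ) = (q.1 : ℕ) + 1 := h1
          apply hq
          have e1 : q.1 = q0.1 := Fin.ext (by show (q.1 : ℕ) = (pt : ℕ) - 1; omega)
          have e2 : q.2 = q0.2 := h2.symm
          exact Prod.ext e1 e2
        simp [dshift, this]
      · intro h; exact absurd (Finset.mem_univ q0) h
  · set G : ℕ → ℝ := fun k => if h : k < T + 1 then ∑ j, |v (⟨k, h⟩, j)| else 0 with hG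
    have hGnn : ∀ k, 0 ≤ G k := by
      intro k; rw [hG]; dsimp only
      split
      · exact Finset.sum_nonneg fun _ _ => abs_nonneg _
      · exact le_refl 0
    have lhs : l1norm v' = ∑ t ∈ Finset.range (T+1), G (t + 1) := by
      rw [l1norm, Fintype.sum_prod_type, ← Fin.sum_univ_eq_sum_range (fun k => G (k+1)) (T+1)]
      refine Finset.sum_congr rfl fun t _ => ?_
      rw [hG]; dsimp only
      by_cases h : (t : ℕ) + 1 < T + 1
      · rw [dif_pos h]
        refine Finset.sum_congr rfl fun j _ => by rw [hv']; dsimp only; rw [dif_pos h]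
      · rw [dif_neg h]
        refine Finset.sum_eq_zero fun j _ => by rw [hv']; dsimp only; rw [dif_neg h, abs_zero]
    have rhs : l1norm v = ∑ t ∈ Finset.range (T+1), G t := by
      rw [l1norm, Fintype.sum_prod_type, ← Fin.sum_univ_eq_sum_range G (T+1)]
      refine Finset.sum_congr rfl fun t _ => ?_
      rw [hG]; dsimp only; rw [dif_pos t.isLt]
    rw [lhs, rhs]
    have h1 : ∑ t ∈ Finset.range (T+2), G t = (∑ t ∈ Finset.range (T+1), G (t+1)) + G 0 :=
      Finset.sum_range_succ' G (T+1)
    have h2 : ∑ t ∈ Finset.range (T+2), G t = (∑ t ∈ Finset.range (T+1), G t) + G (T+1) :=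
      Finset.sum_range_succ G (T+1)
    have h3 : G (T+1) = 0 := by rw [hG]; dsimp only; rw [dif_neg (by omega)]
    have := hGnn 0
    linarith

end shift

section lem2
variable {ι κ τ : Type*} [Fintype ι] [Fintype κ] [Fintype τ]

lemma matL1_blkdiag_le {T n m : ℕ} (hn : 0 < n) (hm : 0 < m) {c : ℝ}
    (M : Matrix (Fin n) (Fin m) ℝ) (hM : matL1 M ≤ c) : matL1 (blkdiag T M) ≤ c := by
  have : Nonempty (Fin m) := ⟨⟨0, hm⟩⟩
  have : Nonempty (Fin (T+1) × Fin m) := ⟨(0, ⟨0, hm⟩)⟩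
  refine matL1_le fun q => ?_
  have : ∑ p : Fin (T+1) × Fin n, |blkdiag T M p q| = ∑ i, |M i q.2| := by
    rw [Fintype.sum_prod_type]
    rw [Finset.sum_eq_single q.1]
    · refine Finset.sum_congr rfl fun i _ => by rw [blkdiag, if_pos rfl]
    · intro t _ ht
      refine Finset.sum_eq_zero fun i _ => by rw [blkdiag, if_neg ht, abs_zero]
    · intro h; exact absurd (Finset.mem_univ q.1) h
  rw [this]
  exact le_trans (col_le_matL1 M q.2) hM

lemma matL1_fromColumns_le [Nonempty κ] [Nonempty τ] {cM cP : ℝ}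
    (M : Matrix ι κ ℝ) (P : Matrix ι τ ℝ) (hM : matL1 M ≤ cM) (hP : matL1 P ≤ cP) :
    matL1 (Matrix.fromCols M P) ≤ max cM cP := by
  refine matL1_le fun j => ?_
  cases j with
  | inl j =>
      have he : ∑ i, |Matrix.fromCols M P i (Sum.inl j)| = ∑ i, |M i j| :=
        Finset.sum_congr rfl fun i _ => by rw [Matrix.fromCols_apply_inl]
      rw [he]
      exact le_trans (col_le_matL1 M j) (le_trans hM (le_max_left _ _))
  | inr j =>
      have he : ∑ i, |Matrix.fromCols M P i (Sum.inr j)| = ∑ i, |P i j| :=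
        Finset.sum_congr rfl fun i _ => by rw [Matrix.fromCols_apply_inr]
      rw [he]
      exact le_trans (col_le_matL1 P j) (le_trans hP (le_max_right _ _))

end lem2

lemma l1norm_nonneg' {ι : Type*} [Fintype ι] (v : ι → ℝ) : 0 ≤ l1norm v :=
  Finset.sum_nonneg fun _ _ => abs_nonneg _

lemma l1norm_sub_le' {ι : Type*} [Fintype ι] (a b : ι → ℝ) :
    l1norm (a - b) ≤ l1norm a + l1norm b := by
  rw [l1norm, l1norm, l1norm, ← Finset.sum_add_distrib]
  exact Finset.sum_le_sum fun i _ => by simpa using abs_sub (a i) (b i)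

lemma l1norm_cont {ι : Type*} [Fintype ι] : Continuous (fun v : ι → ℝ => l1norm v) := by
  unfold l1norm
  exact continuous_finset_sum _ fun i _ => (continuous_apply i).abs

section meas
variable {ι κ' : Type*} [Fintype ι] [Fintype κ']

lemma integrable_dirac'' {f : (ι → ℝ) → ℝ} (hf : Measurable f) (a : ι → ℝ) :
    Integrable f (Measure.dirac a) := by
  refine ⟨hf.aestronglyMeasurable, ?_⟩
  rw [HasFiniteIntegral, lintegral_dirac' _ (by fun_prop)]
  exact ENNReal.coe_lt_top

lemma emp_prob {N : ℕ} (hN : 0 < N) (a : Fin N → ι → ℝ) : IsProbabilityMeasure (emp a) := by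
  constructor
  rw [emp, Measure.smul_apply, Measure.finset_sum_apply]
  simp only [measure_univ, Finset.sum_const, Finset.card_univ, Fintype.card_fin,
    nsmul_eq_mul, mul_one, smul_eq_mul]
  exact ENNReal.inv_mul_cancel (by exact_mod_cast hN.ne') (by simp)

lemma integrable_l1norm_emp {N : ℕ} (hN : 0 < N) (a : Fin N → ι → ℝ) :
    Integrable (fun v => l1norm v) (emp a) := by
  rw [emp]
  refine Integrable.smul_measure ?_ (ENNReal.inv_ne_top.mpr (by exact_mod_cast hN.ne'))
  exact integrable_finset_sum_measure.mpr fun i _ =>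
    integrable_dirac'' (by exact l1norm_cont.measurable) _

lemma wass_le {P Q : Measure (κ' → ℝ)} {π : Measure ((κ' → ℝ) × (κ' → ℝ))}
    (h1 : IsProbabilityMeasure π) (h2 : π.map Prod.fst = P) (h3 : π.map Prod.snd = Q) :
    wass P Q ≤ ∫ p, l1norm (p.1 - p.2) ∂π := by
  refine csInf_le ⟨0, fun r hr => ?_⟩ ⟨π, h1, h2, h3, rfl⟩
  obtain ⟨π', -, -, -, rfl⟩ := hr
  exact integral_nonneg fun p => l1norm_nonneg' _

theorem coupling_bound {N : ℕ} (hN : 0 < N)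
    (Pw : Measure (ι → ℝ)) [IsProbabilityMeasure Pw]
    (hPwmom : Integrable (fun v => l1norm v) Pw)
    (w : Fin N → ι → ℝ) (yhat : Fin N → κ' → ℝ) (Gv : (ι → ℝ) → (κ' → ℝ))
    (hGv : Measurable Gv) (D2 : ℝ) (hgrow : ∀ v, l1norm (Gv v) ≤ D2 * l1norm v)
    (a : Fin N → ℝ) (C : ℝ) (hC : 0 ≤ C)
    (hbound : ∀ i, ∀ᵐ v ∂Pw, l1norm (yhat i - Gv v) ≤ a i + C * l1norm (w i - v))
    (π : Measure ((ι → ℝ) × (ι → ℝ))) (hπ : IsProbabilityMeasure π)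
    (hfst : π.map Prod.fst = emp w) (hsnd : π.map Prod.snd = Pw) :
    wass (emp yhat) (Pw.map Gv)
      ≤ (N:ℝ)⁻¹ * ∑ i, a i + C * ∫ p, l1norm (p.1 - p.2) ∂π := by
  classical
  -- basic sets
  set A : Fin N → Set ((ι → ℝ) × (ι → ℝ)) := fun i => Prod.fst ⁻¹' {w i} with hA
  have hAm : ∀ i, MeasurableSet (A i) := fun i =>
    measurable_fst (measurableSet_singleton (w i))
  set c : Fin N → ℕ := fun i => (Finset.univ.filter fun j => w j = w i).card with hc
  have hc0 : ∀ i, c i ≠ 0 := by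
    intro i h
    have : i ∈ Finset.univ.filter fun j => w j = w i := by simp
    rw [Finset.card_eq_zero.mp h] at this
    exact absurd this (Finset.notMem_empty i)
  have hcinv0 : ∀ i, ((c i : ℝ≥0∞))⁻¹ ≠ ∞ := fun i =>
    ENNReal.inv_ne_top.mpr (by exact_mod_cast hc0 i)
  -- measure of A i
  have hempapp : ∀ v0 : ι → ℝ, emp w {v0} =
      (N : ℝ≥0∞)⁻¹ * (Finset.univ.filter fun j => w j = v0).card := by
    intro v0
    rw [emp, Measure.smul_apply, Measure.finset_sum_apply, smul_eq_mul]
    congr 1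
    rw [← Finset.sum_boole]
    refine Finset.sum_congr rfl fun j _ => ?_
    rw [Measure.dirac_apply' _ (measurableSet_singleton v0), Set.indicator_apply]
    by_cases h : w j = v0 <;> simp [h]
  have hπA : ∀ i, π (A i) = (N : ℝ≥0∞)⁻¹ * c i := by
    intro i
    have := Measure.map_apply (μ := π) measurable_fst (measurableSet_singleton (w i))
    rw [hfst] at this
    rw [hA]; dsimp only
    rw [← this, hempapp]
  -- the transport maps
  set Tm : Fin N → ((ι → ℝ) × (ι → ℝ)) → ((κ' → ℝ) × (κ' → ℝ)) :=
    fun i p => (yhat i, Gv p.2) with hTm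
  have hTmm : ∀ i, Measurable (Tm i) := fun i =>
    measurable_const.prodMk (hGv.comp measurable_snd)
  set μ : Fin N → Measure ((κ' → ℝ) × (κ' → ℝ)) :=
    fun i => ((c i : ℝ≥0∞))⁻¹ • ((π.restrict (A i)).map (Tm i)) with hμ
  set PP : Measure ((κ' → ℝ) × (κ' → ℝ)) := ∑ i, μ i with hPP
  have hμapp : ∀ i s, MeasurableSet s →
      μ i s = (c i : ℝ≥0∞)⁻¹ * π ((Tm i) ⁻¹' s ∩ A i) := by
    intro i s hs
    rw [hμ]; dsimp only
    rw [Measure.smul_apply, Measure.map_apply (hTmm i) hs,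
      Measure.restrict_apply (hTmm i hs), smul_eq_mul]
  have hPPapp : ∀ s, MeasurableSet s →
      PP s = ∑ i, (c i : ℝ≥0∞)⁻¹ * π ((Tm i) ⁻¹' s ∩ A i) := by
    intro s hs
    rw [hPP, Measure.finset_sum_apply]
    exact Finset.sum_congr rfl fun i _ => hμapp i s hs
  have hcc : ∀ i, (c i : ℝ≥0∞)⁻¹ * ((N : ℝ≥0∞)⁻¹ * c i) = (N : ℝ≥0∞)⁻¹ := by
    intro i
    rw [mul_comm ((N : ℝ≥0∞))⁻¹, ← mul_assoc, ENNReal.inv_mul_cancel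
      (by exact_mod_cast hc0 i) (by simp), one_mul]
  have hPPprob : IsProbabilityMeasure PP := by
    constructor
    rw [hPPapp Set.univ MeasurableSet.univ]
    have : ∀ i, (c i : ℝ≥0∞)⁻¹ * π ((Tm i) ⁻¹' Set.univ ∩ A i) = (N : ℝ≥0∞)⁻¹ := by
      intro i
      rw [Set.preimage_univ, Set.univ_inter, hπA i, hcc i]
    rw [Finset.sum_congr rfl fun i _ => this i]
    simp only [Finset.sum_const, Finset.card_univ, Fintype.card_fin, nsmul_eq_mul]
    exact ENNReal.mul_inv_cancel (by exact_mod_cast hN.ne') (by simp)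
  -- first marginal
  have hmapfst : PP.map Prod.fst = emp yhat := by
    ext s hs
    rw [Measure.map_apply measurable_fst hs, hPPapp _ (measurable_fst hs)]
    have hterm : ∀ i, (c i : ℝ≥0∞)⁻¹ * π ((Tm i) ⁻¹' (Prod.fst ⁻¹' s) ∩ A i)
        = if yhat i ∈ s then (N : ℝ≥0∞)⁻¹ else 0 := by
      intro i
      by_cases h : yhat i ∈ s
      · have : (Tm i) ⁻¹' (Prod.fst ⁻¹' s) = Set.univ := by
          rw [Set.eq_univ_iff_forall]; intro p; exact h
        rw [this, Set.univ_inter, hπA i, hcc i, if_pos h]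
      · have : (Tm i) ⁻¹' (Prod.fst ⁻¹' s) = ∅ := by
          rw [Set.eq_empty_iff_forall_notMem]; intro p; exact h
        rw [this, Set.empty_inter, measure_empty, mul_zero, if_neg h]
    rw [Finset.sum_congr rfl fun i _ => hterm i]
    rw [emp, Measure.smul_apply, Measure.finset_sum_apply, smul_eq_mul, Finset.mul_sum]
    refine Finset.sum_congr rfl fun i _ => ?_
    rw [Measure.dirac_apply' _ hs, Set.indicator_apply]
    by_cases h : yhat i ∈ s <;> simp [h]
  -- grouping lemma (ENNReal version)
  have hgroup : ∀ B : Set ((ι → ℝ) × (ι → ℝ)), MeasurableSet B →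
      ∑ i, (c i : ℝ≥0∞)⁻¹ * π (B ∩ A i) = π B := by
    intro B hB
    set F : (ι → ℝ) → ℝ≥0∞ := fun v =>
      ((Finset.univ.filter fun j => w j = v).card : ℝ≥0∞)⁻¹ * π (B ∩ Prod.fst ⁻¹' {v}) with hF
    have h1 : ∑ i, (c i : ℝ≥0∞)⁻¹ * π (B ∩ A i) = ∑ i, F (w i) :=
      Finset.sum_congr rfl fun i _ => rfl
    rw [h1, Finset.sum_comp F w]
    have h2 : ∀ v ∈ Finset.univ.image w,
        ((Finset.univ.filter fun j => w j = v).card) • F v = π (B ∩ Prod.fst ⁻¹' {v}) := by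
      intro v hv
      obtain ⟨i, -, rfl⟩ := Finset.mem_image.mp hv
      have hne : ((Finset.univ.filter fun j => w j = w i).card : ℝ≥0∞) ≠ 0 := by
        exact_mod_cast hc0 i
      rw [hF]; dsimp only
      rw [nsmul_eq_mul, ← mul_assoc, ENNReal.mul_inv_cancel hne (by simp), one_mul]
    rw [Finset.sum_congr rfl h2]
    have hdisj : (↑(Finset.univ.image w) : Set (ι → ℝ)).PairwiseDisjoint
        (fun v => B ∩ Prod.fst ⁻¹' {v}) := by
      intro v1 _ v2 _ hne
      refine Set.disjoint_left.mpr fun p hp1 hp2 => ?_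
      exact hne (hp1.2.symm.trans hp2.2)
    have hmeas : ∀ v ∈ Finset.univ.image w,
        MeasurableSet (B ∩ Prod.fst ⁻¹' {v}) := fun v _ =>
      hB.inter (measurable_fst (measurableSet_singleton v))
    rw [← measure_biUnion_finset hdisj hmeas]
    have hU : (⋃ v ∈ Finset.univ.image w, B ∩ Prod.fst ⁻¹' {v}) =
        B ∩ Prod.fst ⁻¹' (↑(Finset.univ.image w) : Set (ι → ℝ)) := by
      ext p
      simp only [Set.mem_iUnion, Set.mem_inter_iff, Set.mem_preimage, Set.mem_singleton_iff,
        Finset.coe_image, Set.mem_image, Finset.mem_coe, Finset.mem_image]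
      constructor
      · rintro ⟨v, hv, hpB, rfl⟩; exact ⟨hpB, hv⟩
      · rintro ⟨hpB, hv⟩; exact ⟨p.1, hv, hpB, rfl⟩
    rw [hU]
    -- π (B ∩ U) = π B since the complement of U is null
    have hUm : MeasurableSet (Prod.fst ⁻¹' (↑(Finset.univ.image w) : Set (ι → ℝ)) :
        Set ((ι → ℝ) × (ι → ℝ))) :=
      (Finset.univ.image w).finite_toSet.measurableSet.preimage measurable_fst
    have hnull : π ((Prod.fst ⁻¹' (↑(Finset.univ.image w) : Set (ι → ℝ)) :
        Set ((ι → ℝ) × (ι → ℝ)))ᶜ) = 0 := by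
      have hcm : MeasurableSet ((↑(Finset.univ.image w) : Set (ι → ℝ))ᶜ) :=
        (Finset.univ.image w).finite_toSet.measurableSet.compl
      have := Measure.map_apply (μ := π) measurable_fst hcm
      rw [hfst] at this
      rw [← Set.preimage_compl, ← this, emp, Measure.smul_apply, Measure.finset_sum_apply]
      have : ∀ j : Fin N, Measure.dirac (w j)
          ((↑(Finset.univ.image w) : Set (ι → ℝ))ᶜ) = 0 := by
        intro j
        have hmem : ¬ (w j ∈ ((↑(Finset.univ.image w) : Set (ι → ℝ))ᶜ)) := by
          simp only [Set.mem_compl_iff, not_not]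
          exact Finset.mem_coe.mpr (Finset.mem_image_of_mem w (Finset.mem_univ j))
        rw [Measure.dirac_apply' _ hcm, Set.indicator_apply, if_neg hmem]
      rw [Finset.sum_congr rfl fun j _ => this j]
      simp
    refine le_antisymm (measure_mono Set.inter_subset_left) ?_
    have hsplit := measure_inter_add_diff (μ := π)
      B (t := Prod.fst ⁻¹' (↑(Finset.univ.image w) : Set (ι → ℝ))) hUm
    have hd : π (B \ Prod.fst ⁻¹' (↑(Finset.univ.image w) : Set (ι → ℝ))) = 0 :=
      le_antisymm (le_trans (measure_mono (Set.diff_subset_compl _ _)) hnull.le) zero_le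
    have hfin : π B = π (B ∩ Prod.fst ⁻¹' (↑(Finset.univ.image w) : Set (ι → ℝ))) := by
      rw [← hsplit, hd, add_zero]
    exact hfin.le
  -- second marginal
  have hmapsnd : PP.map Prod.snd = Pw.map Gv := by
    ext s hs
    rw [Measure.map_apply measurable_snd hs, hPPapp _ (measurable_snd hs)]
    have hpre : ∀ i, (Tm i) ⁻¹' (Prod.snd ⁻¹' s) = Prod.snd ⁻¹' (Gv ⁻¹' s) := fun i => rfl
    rw [Finset.sum_congr rfl fun i _ => by rw [hpre i]]
    rw [hgroup _ (measurable_snd (hGv hs))]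
    rw [Measure.map_apply hGv hs, ← hsnd, Measure.map_apply measurable_snd (hGv hs)]
  -- integrability facts
  have hsubmeas : Measurable (fun p : (ι → ℝ) × (ι → ℝ) => l1norm (p.1 - p.2)) :=
    (l1norm_cont.comp (continuous_fst.sub continuous_snd)).measurable
  have hsnd_int : Integrable (fun p : (ι → ℝ) × (ι → ℝ) => l1norm p.2) π := by
    have h := hPwmom
    rw [← hsnd] at h
    exact (integrable_map_measure l1norm_cont.measurable.aestronglyMeasurable
      measurable_snd.aemeasurable).mp h
  have hfst_int : Integrable (fun p : (ι → ℝ) × (ι → ℝ) => l1norm p.1) π := by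
    have h := integrable_l1norm_emp hN w
    rw [← hfst] at h
    exact (integrable_map_measure l1norm_cont.measurable.aestronglyMeasurable
      measurable_fst.aemeasurable).mp h
  have hg0int : Integrable (fun p : (ι → ℝ) × (ι → ℝ) => l1norm (p.1 - p.2)) π := by
    refine Integrable.mono' (hfst_int.add hsnd_int) hsubmeas.aestronglyMeasurable ?_
    filter_upwards with p
    rw [Real.norm_eq_abs, abs_of_nonneg (l1norm_nonneg' _)]
    exact l1norm_sub_le' _ _
  have hgimeas : ∀ i, Measurable (fun p : (ι → ℝ) × (ι → ℝ) => l1norm (yhat i - Gv p.2)) := by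
    intro i
    exact (l1norm_cont.measurable).comp (measurable_const.sub (hGv.comp measurable_snd))
  have hgi : ∀ i, Integrable (fun p : (ι → ℝ) × (ι → ℝ) => l1norm (yhat i - Gv p.2)) π := by
    intro i
    refine Integrable.mono' ((integrable_const (l1norm (yhat i))).add (hsnd_int.const_mul D2))
      (hgimeas i).aestronglyMeasurable ?_
    filter_upwards with p
    rw [Real.norm_eq_abs, abs_of_nonneg (l1norm_nonneg' _)]
    have h1 : l1norm (yhat i - Gv p.2) ≤ l1norm (yhat i) + l1norm (Gv p.2) :=
      l1norm_sub_le' _ _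
    have h2 : l1norm (Gv p.2) ≤ D2 * l1norm p.2 := hgrow p.2
    show l1norm (yhat i - Gv p.2) ≤ l1norm (yhat i) + D2 * l1norm p.2
    linarith
  have hcont' : Continuous (fun p : (κ' → ℝ) × (κ' → ℝ) => l1norm (p.1 - p.2)) :=
    l1norm_cont.comp (continuous_fst.sub continuous_snd)
  have hμint : ∀ i, Integrable (fun p : (κ' → ℝ) × (κ' → ℝ) => l1norm (p.1 - p.2)) (μ i) := by
    intro i
    rw [hμ]; dsimp only
    refine Integrable.smul_measure ?_ (hcinv0 i)
    refine (integrable_map_measure ?_ (hTmm i).aemeasurable).mpr ?_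
    · exact hcont'.measurable.aestronglyMeasurable
    · exact (hgi i).restrict
  -- cost identity
  have hcost_eq : ∫ p, l1norm (p.1 - p.2) ∂PP
      = ∑ i, ((c i : ℝ))⁻¹ * ∫ p in A i, l1norm (yhat i - Gv p.2) ∂π := by
    rw [hPP, integral_finset_sum_measure (fun i _ => hμint i)]
    refine Finset.sum_congr rfl fun i _ => ?_
    rw [hμ]; dsimp only
    rw [integral_smul_measure, integral_map (hTmm i).aemeasurable
      hcont'.measurable.aestronglyMeasurable]
    rw [ENNReal.toReal_inv, ENNReal.toReal_natCast, smul_eq_mul]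
  -- bound the inner integrals
  have hinner : ∀ i, ∫ p in A i, l1norm (yhat i - Gv p.2) ∂π
      ≤ a i * ((N : ℝ)⁻¹ * (c i : ℝ)) + C * ∫ p in A i, l1norm (p.1 - p.2) ∂π := by
    intro i
    have hae1 : ∀ᵐ p ∂π.restrict (A i), p.1 = w i := by
      filter_upwards [ae_restrict_mem (hAm i)] with p hp
      exact hp
    have hmeasset : MeasurableSet {v : ι → ℝ |
        l1norm (yhat i - Gv v) ≤ a i + C * l1norm (w i - v)} := by
      refine measurableSet_le ?_ ?_
      · exact (l1norm_cont.measurable).comp (measurable_const.sub hGv)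
      · exact (measurable_const.add (((l1norm_cont.measurable).comp
          (measurable_const.sub measurable_id)).const_mul C))
    have hae2 : ∀ᵐ p ∂π, l1norm (yhat i - Gv p.2) ≤ a i + C * l1norm (w i - p.2) := by
      have hs := hbound i
      rw [← hsnd] at hs
      exact (ae_map_iff measurable_snd.aemeasurable hmeasset).mp hs
    have hb : ∀ᵐ p ∂π.restrict (A i),
        l1norm (yhat i - Gv p.2) ≤ a i + C * l1norm (p.1 - p.2) := by
      filter_upwards [hae1, ae_restrict_of_ae hae2] with p h1 h2
      rw [h1]
      exact h2
    have hmono := integral_mono_ae ((hgi i).restrict)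
      ((integrable_const (a i)).add ((hg0int.restrict).const_mul C)) hb
    have hRHS : ∫ p in A i, (a i + C * l1norm (p.1 - p.2)) ∂π
        = a i * ((N : ℝ)⁻¹ * (c i : ℝ)) + C * ∫ p in A i, l1norm (p.1 - p.2) ∂π := by
      rw [integral_add (integrable_const _) ((hg0int.restrict).const_mul C), integral_const,
        integral_const_mul, measureReal_def, Measure.restrict_apply_univ, hπA i, ENNReal.toReal_mul,
        ENNReal.toReal_inv, ENNReal.toReal_natCast, ENNReal.toReal_natCast, smul_eq_mul,
        mul_comm ((N:ℝ)⁻¹ * (c i : ℝ)) (a i)]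
    exact le_trans hmono (le_of_eq hRHS)
  -- real grouping
  have hgroupR : ∑ i, ((c i : ℝ))⁻¹ * ∫ p in A i, l1norm (p.1 - p.2) ∂π
      ≤ ∫ p, l1norm (p.1 - p.2) ∂π := by
    set S : (ι → ℝ) → ℝ := fun v =>
      ((Finset.univ.filter fun j => w j = v).card : ℝ)⁻¹
        * ∫ p in (Prod.fst ⁻¹' {v} : Set ((ι → ℝ) × (ι → ℝ))), l1norm (p.1 - p.2) ∂π with hS
    have h1 : ∑ i, ((c i : ℝ))⁻¹ * ∫ p in A i, l1norm (p.1 - p.2) ∂π = ∑ i, S (w i) :=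
      Finset.sum_congr rfl fun i _ => rfl
    rw [h1, Finset.sum_comp S w]
    have h2 : ∀ v ∈ Finset.univ.image w,
        (Finset.univ.filter fun j => w j = v).card • S v
          = ∫ p in (Prod.fst ⁻¹' {v} : Set ((ι → ℝ) × (ι → ℝ))), l1norm (p.1 - p.2) ∂π := by
      intro v hv
      obtain ⟨i, -, rfl⟩ := Finset.mem_image.mp hv
      have hne : ((Finset.univ.filter fun j => w j = w i).card : ℝ) ≠ 0 := by
        exact_mod_cast hc0 i
      rw [hS]; dsimp only
      rw [nsmul_eq_mul, ← mul_assoc, mul_inv_cancel₀ hne, one_mul]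
    rw [Finset.sum_congr rfl h2]
    have hdisj : (↑(Finset.univ.image w) : Set (ι → ℝ)).PairwiseDisjoint
        (fun v => (Prod.fst ⁻¹' {v} : Set ((ι → ℝ) × (ι → ℝ)))) := by
      intro v1 _ v2 _ hne
      refine Set.disjoint_left.mpr fun p hp1 hp2 => ?_
      exact hne (hp1.symm.trans hp2)
    rw [← integral_biUnion_finset (Finset.univ.image w)
      (fun v _ => (measurableSet_singleton v).preimage measurable_fst) hdisj
      (fun v _ => hg0int.integrableOn)]
    exact setIntegral_le_integral hg0int
      (Filter.Eventually.of_forall fun p => l1norm_nonneg' _)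
  -- put everything together
  have hstep : ∫ p, l1norm (p.1 - p.2) ∂PP
      ≤ (N : ℝ)⁻¹ * ∑ i, a i + C * ∑ i, ((c i : ℝ))⁻¹ * ∫ p in A i, l1norm (p.1 - p.2) ∂π := by
    rw [hcost_eq]
    have hterm : ∀ i, ((c i : ℝ))⁻¹ * ∫ p in A i, l1norm (yhat i - Gv p.2) ∂π
        ≤ (N : ℝ)⁻¹ * a i + C * (((c i : ℝ))⁻¹ * ∫ p in A i, l1norm (p.1 - p.2) ∂π) := by
      intro i
      have hcR : ((c i : ℝ)) ≠ 0 := by exact_mod_cast hc0 i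
      have hcpos : (0:ℝ) < (c i : ℝ) := by
        have := Nat.pos_of_ne_zero (hc0 i); exact_mod_cast this
      have := mul_le_mul_of_nonneg_left (hinner i) (inv_nonneg.mpr hcpos.le)
      refine le_trans this (le_of_eq ?_)
      have hcc' : (c i : ℝ)⁻¹ * (c i : ℝ) = 1 := inv_mul_cancel₀ hcR
      linear_combination (a i * (N:ℝ)⁻¹) * hcc'
    refine le_trans (Finset.sum_le_sum fun i _ => hterm i) (le_of_eq ?_)
    rw [Finset.sum_add_distrib, Finset.mul_sum, Finset.mul_sum]
  have hfinal := le_trans hstep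
    (add_le_add_right (mul_le_mul_of_nonneg_left hgroupR hC) ((N : ℝ)⁻¹ * ∑ i, a i))
  exact le_trans (wass_le hPPprob hmapfst hmapsnd) hfinal

lemma exists_coupling_close {P Q : Measure (κ' → ℝ)} [IsProbabilityMeasure P]
    [IsProbabilityMeasure Q] {k δ : ℝ} (h : wass P Q ≤ k) (hδ : 0 < δ) :
    ∃ π : Measure ((κ' → ℝ) × (κ' → ℝ)), IsProbabilityMeasure π ∧
      π.map Prod.fst = P ∧ π.map Prod.snd = Q ∧
      ∫ p, l1norm (p.1 - p.2) ∂π < k + δ := by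
  set S := { r | ∃ π : Measure ((κ' → ℝ) × (κ' → ℝ)),
    IsProbabilityMeasure π ∧ π.map Prod.fst = P ∧ π.map Prod.snd = Q ∧
    r = ∫ p, l1norm (p.1 - p.2) ∂π } with hS
  have hne : S.Nonempty := by
    refine ⟨∫ p, l1norm (p.1 - p.2) ∂(P.prod Q), P.prod Q, inferInstance, ?_, ?_, rfl⟩
    · rw [Measure.map_fst_prod]; simp
    · rw [Measure.map_snd_prod]; simp
  obtain ⟨r, hrS, hrlt⟩ := Real.lt_sInf_add_pos hne hδ
  obtain ⟨π, h1, h2, h3, rfl⟩ := hrS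
  exact ⟨π, h1, h2, h3, lt_of_lt_of_le hrlt (add_le_add_left h δ)⟩


section alg
variable {ι : Type*} [Fintype ι] [DecidableEq ι] [Nonempty ι]

lemma l1norm_neg (v : ι → ℝ) : l1norm (-v) = l1norm v := by
  rw [l1norm, l1norm]
  exact Finset.sum_congr rfl fun i _ => by rw [Pi.neg_apply, abs_neg]

lemma det_isUnit {H : Matrix ι ι ℝ} (h : matL1 H < 1) : IsUnit (1 + H).det := by
  rw [isUnit_iff_ne_zero]
  intro hdet
  obtain ⟨v, hv, hmul⟩ := (Matrix.exists_mulVec_eq_zero_iff).mpr hdet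
  have hveq : v = -(H *ᵥ v) := by
    rw [Matrix.add_mulVec, Matrix.one_mulVec] at hmul
    funext j
    have := congrFun hmul j
    rw [Pi.add_apply, Pi.zero_apply] at this
    rw [Pi.neg_apply]
    linarith
  have h1 : l1norm v ≤ matL1 H * l1norm v := by
    calc l1norm v = l1norm (-(H *ᵥ v)) := by conv_lhs => rw [hveq]
      _ = l1norm (H *ᵥ v) := l1norm_neg _
      _ ≤ matL1 H * l1norm v := l1norm_mulVec_le _ _
  have h2 : 0 < l1norm v := l1norm_pos hv
  nlinarith

lemma smallgain {H : Matrix ι ι ℝ} {γ : ℝ} (hγ : matL1 H ≤ γ) (hγ1 : γ < 1)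
    {y b : ι → ℝ} (h : (1 + H) *ᵥ y = b) : (1 - γ) * l1norm y ≤ l1norm b := by
  have hy : y = b - H *ᵥ y := by
    rw [← h, Matrix.add_mulVec, Matrix.one_mulVec]
    abel
  have h1 : l1norm y ≤ l1norm b + l1norm (H *ᵥ y) := by
    calc l1norm y = l1norm (b - H *ᵥ y) := by rw [← hy]
      _ ≤ l1norm b + l1norm (H *ᵥ y) := l1norm_sub_le _ _
  have h2 : l1norm (H *ᵥ y) ≤ matL1 H * l1norm y := l1norm_mulVec_le _ _
  have h3 : matL1 H * l1norm y ≤ γ * l1norm y :=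
    mul_le_mul_of_nonneg_right hγ (l1norm_nonneg _)
  linarith

end alg

lemma blkdiag_sub (T : ℕ) {n m : ℕ} (M P : Matrix (Fin n) (Fin m) ℝ) :
    blkdiag T (M - P) = blkdiag T M - blkdiag T P := by
  funext p q
  by_cases h : p.1 = q.1 <;> simp [blkdiag, Matrix.sub_apply, h]

lemma measurable_mulVec {ι κ : Type*} [Fintype ι] [Fintype κ] (M : Matrix ι κ ℝ) :
    Measurable (fun v : κ → ℝ => M *ᵥ v) := by
  refine measurable_pi_lambda _ fun i => ?_
  show Measurable fun v : κ → ℝ => ∑ k, M i k * v k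
  exact Finset.measurable_sum _ fun k _ => (measurable_pi_apply k).const_mul _

/-- **Lemma 4, small-gain bound.** Under the small-gain condition
`max(e_A, e_B)‖ΦZ‖ < γ < 1` and `d_W(P̄_w, P_w) ≤ κ`, the distribution shift satisfies
`d_W(P̂_pred, P_cl) ≤ (γ/(1−γ))(1/N)Σᵢ‖Φŵⁱ − [xⁱ; uⁱ]‖ + (κ/(1−γ))‖ΦZ‖`. -/
theorem stmt12 {n m T N : ℕ} (hn : 0 < n) (hm : 0 < m) (hT : 0 < T) (hN : 0 < N)
    (Ahat A : Matrix (Fin n) (Fin n) ℝ) (Bhat B : Matrix (Fin n) (Fin m) ℝ)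
    (eA eB : ℝ) (heA : matL1 (Ahat - A) ≤ eA) (heB : matL1 (Bhat - B) ≤ eB)
    (Φx : Matrix (Fin (T+1) × Fin n) (Fin (T+1) × Fin n) ℝ)
    (Φu : Matrix (Fin (T+1) × Fin m) (Fin (T+1) × Fin n) ℝ)
    (hx : BlockLT Φx) (hu : BlockLT Φu)
    (hSLS : (1 - dshift T n * blkdiag T Ahat) * Φx - dshift T n * blkdiag T Bhat * Φu = 1)
    (Φ : Matrix ((Fin (T+1) × Fin n) ⊕ (Fin (T+1) × Fin m)) (Fin (T+1) × Fin n) ℝ)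
    (hΦ : Φ = Matrix.fromRows Φx Φu)
    (ΔM : Matrix (Fin (T+1) × Fin n) ((Fin (T+1) × Fin n) ⊕ (Fin (T+1) × Fin m)) ℝ)
    (hΔM : ΔM = Matrix.fromCols (blkdiag T (Ahat - A)) (blkdiag T (Bhat - B)))
    (x0 : Fin n → ℝ)
    (Pw : Measure ((Fin (T+1) × Fin n) → ℝ)) [IsProbabilityMeasure Pw]
    (hPwmom : Integrable (fun v => l1norm v) Pw)
    (hPwsupp : ∀ᵐ v ∂Pw, ∀ j, v (0, j) = x0 j)
    (x : Fin N → (Fin (T+1) × Fin n) → ℝ) (u : Fin N → (Fin (T+1) × Fin m) → ℝ)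
    (w what : Fin N → (Fin (T+1) × Fin n) → ℝ)
    (hw : ∀ i, w i = x i - (dshift T n * blkdiag T A) *ᵥ x i
        - (dshift T n * blkdiag T B) *ᵥ u i)
    (hwhat : ∀ i, what i = x i - (dshift T n * blkdiag T Ahat) *ᵥ x i
        - (dshift T n * blkdiag T Bhat) *ᵥ u i)
    (hw0 : ∀ i j, w i (0, j) = x0 j) (hwhat0 : ∀ i j, what i (0, j) = x0 j)
    (κ γ : ℝ) (hκ : 0 < κ) (hwass : wass (emp w) Pw ≤ κ)
    (hγ0 : 0 ≤ γ) (hγ1 : γ < 1)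
    (hsg : max eA eB * matL1 (Φ * dshift T n) < γ) :
    wass (emp (fun i => Φ *ᵥ what i))
        (Pw.map (fun v => ((1 + Φ * dshift T n * ΔM)⁻¹ * Φ) *ᵥ v))
      ≤ γ / (1 - γ) * ((N : ℝ)⁻¹ * ∑ i, l1norm (Φ *ᵥ what i - Sum.elim (x i) (u i)))
        + κ / (1 - γ) * matL1 (Φ * dshift T n) := by
  classical
  have hNn : Nonempty (Fin n) := ⟨⟨0, hn⟩⟩
  have hNm : Nonempty (Fin m) := ⟨⟨0, hm⟩⟩
  have hNιn : Nonempty (Fin (T+1) × Fin n) := ⟨(0, ⟨0, hn⟩)⟩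
  have hNιm : Nonempty (Fin (T+1) × Fin m) := ⟨(0, ⟨0, hm⟩)⟩
  have hNsum : Nonempty ((Fin (T+1) × Fin n) ⊕ (Fin (T+1) × Fin m)) := ⟨Sum.inl (0, ⟨0, hn⟩)⟩
  have hZΦnn : 0 ≤ matL1 (Φ * dshift T n) := matL1_nonneg _
  have h1γ : (0:ℝ) < 1 - γ := by linarith
  have hΔMle : matL1 ΔM ≤ max eA eB := by
    rw [hΔM]
    exact matL1_fromColumns_le _ _ (matL1_blkdiag_le hn hn _ heA) (matL1_blkdiag_le hn hm _ heB)
  have hHle : matL1 (Φ * dshift T n * ΔM) ≤ max eA eB * matL1 (Φ * dshift T n) := by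
    calc matL1 (Φ * dshift T n * ΔM) ≤ matL1 (Φ * dshift T n) * matL1 ΔM := matL1_mul_le _ _
      _ ≤ matL1 (Φ * dshift T n) * max eA eB := mul_le_mul_of_nonneg_left hΔMle hZΦnn
      _ = max eA eB * matL1 (Φ * dshift T n) := mul_comm _ _
  have hHγ : matL1 (Φ * dshift T n * ΔM) < γ := lt_of_le_of_lt hHle hsg
  have hdet : IsUnit (1 + Φ * dshift T n * ΔM).det := det_isUnit (lt_trans hHγ hγ1)
  have hinv : (1 + Φ * dshift T n * ΔM) * (1 + Φ * dshift T n * ΔM)⁻¹ = 1 :=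
    Matrix.mul_nonsing_inv _ hdet
  have key0 : ∀ v : (Fin (T+1) × Fin n) → ℝ,
      (1 + Φ * dshift T n * ΔM) *ᵥ (((1 + Φ * dshift T n * ΔM)⁻¹ * Φ) *ᵥ v) = Φ *ᵥ v := by
    intro v
    rw [Matrix.mulVec_mulVec, ← Matrix.mul_assoc, hinv, Matrix.one_mul]
  have hwdiff : ∀ i, w i = what i + dshift T n *ᵥ (ΔM *ᵥ Sum.elim (x i) (u i)) := by
    intro i
    rw [hw i, hwhat i, hΔM, Matrix.fromCols_mulVec_sumElim]
    have e1 : Ahat - A = Ahat - A := rfl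
    rw [blkdiag_sub, blkdiag_sub, Matrix.sub_mulVec, Matrix.sub_mulVec, Matrix.mulVec_add,
      Matrix.mulVec_sub, Matrix.mulVec_sub]
    simp only [Matrix.mulVec_mulVec]
    abel
  have keyi : ∀ i, (1 + Φ * dshift T n * ΔM) *ᵥ
        (Φ *ᵥ what i - ((1 + Φ * dshift T n * ΔM)⁻¹ * Φ) *ᵥ w i)
      = (Φ * dshift T n * ΔM) *ᵥ (Φ *ᵥ what i - Sum.elim (x i) (u i)) := by
    intro i
    rw [Matrix.mulVec_sub, key0, Matrix.mulVec_sub]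
    rw [Matrix.add_mulVec, Matrix.one_mulVec]
    conv_lhs => rw [hwdiff i]
    rw [Matrix.mulVec_add]
    simp only [Matrix.mulVec_mulVec]
    rw [Matrix.mul_assoc Φ (dshift T n) ΔM]
    abel
  have KB1 : ∀ i, l1norm (Φ *ᵥ what i - ((1 + Φ * dshift T n * ΔM)⁻¹ * Φ) *ᵥ w i)
      ≤ γ / (1 - γ) * l1norm (Φ *ᵥ what i - Sum.elim (x i) (u i)) := by
    intro i
    have h1 := smallgain (le_of_lt hHγ) hγ1 (keyi i)
    have h2 : l1norm ((Φ * dshift T n * ΔM) *ᵥ (Φ *ᵥ what i - Sum.elim (x i) (u i)))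
        ≤ γ * l1norm (Φ *ᵥ what i - Sum.elim (x i) (u i)) :=
      le_trans (l1norm_mulVec_le _ _) (mul_le_mul_of_nonneg_right hHγ.le (l1norm_nonneg _))
    rw [div_mul_eq_mul_div, le_div_iff₀ h1γ, mul_comm]
    linarith
  have KB2 : ∀ v : (Fin (T+1) × Fin n) → ℝ, (∀ j, v (0, j) = 0) →
      l1norm (((1 + Φ * dshift T n * ΔM)⁻¹ * Φ) *ᵥ v)
        ≤ matL1 (Φ * dshift T n) / (1 - γ) * l1norm v := by
    intro v hv
    obtain ⟨v', hv'eq, hv'le⟩ := exists_shift v hv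
    have h0 : (1 + Φ * dshift T n * ΔM) *ᵥ (((1 + Φ * dshift T n * ΔM)⁻¹ * Φ) *ᵥ v)
        = (Φ * dshift T n) *ᵥ v' := by
      rw [key0, ← hv'eq, Matrix.mulVec_mulVec]
    have h1 := smallgain (le_of_lt hHγ) hγ1 h0
    have h2 : l1norm ((Φ * dshift T n) *ᵥ v') ≤ matL1 (Φ * dshift T n) * l1norm v :=
      le_trans (l1norm_mulVec_le _ _) (mul_le_mul_of_nonneg_left hv'le hZΦnn)
    rw [div_mul_eq_mul_div, le_div_iff₀ h1γ, mul_comm]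
    linarith
  have hGvm : Measurable (fun v : (Fin (T+1) × Fin n) → ℝ =>
      ((1 + Φ * dshift T n * ΔM)⁻¹ * Φ) *ᵥ v) := measurable_mulVec _
  have hC : 0 ≤ matL1 (Φ * dshift T n) / (1 - γ) := div_nonneg hZΦnn h1γ.le
  have hbound : ∀ i, ∀ᵐ v ∂Pw,
      l1norm (Φ *ᵥ what i - ((1 + Φ * dshift T n * ΔM)⁻¹ * Φ) *ᵥ v)
        ≤ γ / (1 - γ) * l1norm (Φ *ᵥ what i - Sum.elim (x i) (u i))
          + matL1 (Φ * dshift T n) / (1 - γ) * l1norm (w i - v) := by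
    intro i
    filter_upwards [hPwsupp] with v hv
    have ht := l1norm_triangle (Φ *ᵥ what i)
      (((1 + Φ * dshift T n * ΔM)⁻¹ * Φ) *ᵥ w i) (((1 + Φ * dshift T n * ΔM)⁻¹ * Φ) *ᵥ v)
    have hd : ((1 + Φ * dshift T n * ΔM)⁻¹ * Φ) *ᵥ w i
        - ((1 + Φ * dshift T n * ΔM)⁻¹ * Φ) *ᵥ v
        = ((1 + Φ * dshift T n * ΔM)⁻¹ * Φ) *ᵥ (w i - v) := (Matrix.mulVec_sub _ _ _).symm
    rw [hd] at ht
    have hz : ∀ j, (w i - v) (0, j) = 0 := fun j => by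
      rw [Pi.sub_apply, hw0 i j, hv j, sub_self]
    have h2 := KB2 (w i - v) hz
    have h3 := KB1 i
    linarith
  -- epsilon argument
  have hmain : ∀ ε : ℝ, 0 < ε →
      wass (emp (fun i => Φ *ᵥ what i))
          (Pw.map (fun v => ((1 + Φ * dshift T n * ΔM)⁻¹ * Φ) *ᵥ v))
        ≤ γ / (1 - γ) * ((N : ℝ)⁻¹ * ∑ i, l1norm (Φ *ᵥ what i - Sum.elim (x i) (u i)))
          + κ / (1 - γ) * matL1 (Φ * dshift T n) + ε := by
    intro ε hε
    have hCp : (0:ℝ) < matL1 (Φ * dshift T n) / (1 - γ) + 1 := by linarith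
    have hδ : 0 < ε / (matL1 (Φ * dshift T n) / (1 - γ) + 1) := by positivity
    haveI := emp_prob hN w
    obtain ⟨π, hπ1, hπ2, hπ3, hπ4⟩ := exists_coupling_close hwass hδ
    have hcb := coupling_bound hN Pw hPwmom w (fun i => Φ *ᵥ what i)
      (fun v => ((1 + Φ * dshift T n * ΔM)⁻¹ * Φ) *ᵥ v) hGvm
      (matL1 ((1 + Φ * dshift T n * ΔM)⁻¹ * Φ))
      (fun v => l1norm_mulVec_le _ v)
      (fun i => γ / (1 - γ) * l1norm (Φ *ᵥ what i - Sum.elim (x i) (u i)))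
      (matL1 (Φ * dshift T n) / (1 - γ)) hC hbound π hπ1 hπ2 hπ3
    have hcost : ∫ p, l1norm (p.1 - p.2) ∂π
        ≤ κ + ε / (matL1 (Φ * dshift T n) / (1 - γ) + 1) := hπ4.le
    have hstep2 : matL1 (Φ * dshift T n) / (1 - γ) * ∫ p, l1norm (p.1 - p.2) ∂π
        ≤ matL1 (Φ * dshift T n) / (1 - γ)
          * (κ + ε / (matL1 (Φ * dshift T n) / (1 - γ) + 1)) :=
      mul_le_mul_of_nonneg_left hcost hC
    have hsum : (N : ℝ)⁻¹ * ∑ i, γ / (1 - γ) * l1norm (Φ *ᵥ what i - Sum.elim (x i) (u i))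
        = γ / (1 - γ) * ((N : ℝ)⁻¹ * ∑ i, l1norm (Φ *ᵥ what i - Sum.elim (x i) (u i))) := by
      rw [← Finset.mul_sum]
      ring
    have hlast : matL1 (Φ * dshift T n) / (1 - γ)
          * (κ + ε / (matL1 (Φ * dshift T n) / (1 - γ) + 1))
        ≤ κ / (1 - γ) * matL1 (Φ * dshift T n) + ε := by
      have he1 : matL1 (Φ * dshift T n) / (1 - γ) * κ
          = κ / (1 - γ) * matL1 (Φ * dshift T n) := by ring
      have he2 : matL1 (Φ * dshift T n) / (1 - γ)
            * (ε / (matL1 (Φ * dshift T n) / (1 - γ) + 1)) ≤ ε := by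
        rw [mul_div_assoc', div_le_iff₀ hCp]
        nlinarith
      rw [mul_add, he1]
      linarith
    calc wass (emp (fun i => Φ *ᵥ what i))
          (Pw.map (fun v => ((1 + Φ * dshift T n * ΔM)⁻¹ * Φ) *ᵥ v))
        ≤ (N : ℝ)⁻¹ * ∑ i, γ / (1 - γ) * l1norm (Φ *ᵥ what i - Sum.elim (x i) (u i))
          + matL1 (Φ * dshift T n) / (1 - γ) * ∫ p, l1norm (p.1 - p.2) ∂π := hcb
      _ ≤ γ / (1 - γ) * ((N : ℝ)⁻¹ * ∑ i, l1norm (Φ *ᵥ what i - Sum.elim (x i) (u i)))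
          + (κ / (1 - γ) * matL1 (Φ * dshift T n) + ε) := by
            rw [hsum]
            exact add_le_add_right (le_trans hstep2 hlast) _
      _ = _ := by ring
  by_contra hcon
  push_neg at hcon
  have hpos : 0 < (wass (emp (fun i => Φ *ᵥ what i))
      (Pw.map (fun v => ((1 + Φ * dshift T n * ΔM)⁻¹ * Φ) *ᵥ v))
    - (γ / (1 - γ) * ((N : ℝ)⁻¹ * ∑ i, l1norm (Φ *ᵥ what i - Sum.elim (x i) (u i)))
        + κ / (1 - γ) * matL1 (Φ * dshift T n))) / 2 := by linarith
  have := hmain _ hpos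
  linarith
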